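/- Let (H₁, H₁⁺), …, (Hₙ, Hₙ⁺) be partially ordered abelian groups, let H = H₁ × ⋯ × Hₙ with the product cone H⁺ = H₁⁺ × ⋯ × Hₙ⁺, and let S ≤ H be a subgroup with S ∩ H⁺ = {0}. Then there is no element x = (x₁, …, xₙ) ∈ S \ {0} with the following property: for every index i with xᵢ ≠ 0 there exist an integer m ≥ 1 and a ∈ S such that the j-th coordinate of a lies in Hⱼ⁺ for every j ≠ i, and a + m·ιᵢ(xᵢ) ∈ H⁺ \ {0}, where ιᵢ(xᵢ) denotes the element of H with i-th coordinate xᵢ and all other coordinates 0. -/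

import Mathlib

section cone

variable {G : Type*} [AddCommGroup G] {C : Set G}

private lemma cone_smul_mem (hz : (0:G) ∈ C)
    (ha : ∀ a ∈ C, ∀ b ∈ C, a + b ∈ C)
    {m : ℤ} (hm : 0 ≤ m) {v : G} (hv : v ∈ C) : m • v ∈ C := by
  lift m to ℕ using hm
  rw [natCast_zsmul]
  induction m with
  | zero => simpa
  | succ k ih =>
    rw [succ_nsmul]
    exact ha _ ih _ hv

private lemma cone_sum_mem {α : Type*} (hz : (0:G) ∈ C)
    (ha : ∀ a ∈ C, ∀ b ∈ C, a + b ∈ C)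
    (s : Finset α) (f : α → G) (hf : ∀ a ∈ s, f a ∈ C) :
    ∑ a ∈ s, f a ∈ C := by
  classical
  induction s using Finset.induction with
  | empty => simpa
  | insert _ _ hns ih =>
    rw [Finset.sum_insert hns]
    exact ha _ (hf _ (Finset.mem_insert_self _ _)) _
      (ih fun a has => hf a (Finset.mem_insert_of_mem has))

private lemma cone_sum_eq_zero {α : Type*} (hz : (0:G) ∈ C)
    (ha : ∀ a ∈ C, ∀ b ∈ C, a + b ∈ C)
    (hp : ∀ a : G, a ∈ C → -a ∈ C → a = 0)
    (s : Finset α) (f : α → G) (hf : ∀ a ∈ s, f a ∈ C)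
    (hsum : ∑ a ∈ s, f a = 0) : ∀ a ∈ s, f a = 0 := by
  classical
  induction s using Finset.induction with
  | empty => simp
  | insert _ _ hns ih =>
    rename_i b t
    rw [Finset.sum_insert hns] at hsum
    have htC : ∑ a ∈ t, f a ∈ C :=
      cone_sum_mem hz ha t f fun a has => hf a (Finset.mem_insert_of_mem has)
    have hb0 : f b = 0 := by
      apply hp _ (hf _ (Finset.mem_insert_self _ _))
      have hneg : -(f b) = ∑ a ∈ t, f a := by
        rw [add_comm] at hsum
        exact neg_eq_of_add_eq_zero_left hsum
      rw [hneg]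
      exact htC
    have ht0 : ∑ a ∈ t, f a = 0 := by
      rw [hb0, zero_add] at hsum
      exact hsum
    intro a has
    rcases Finset.mem_insert.mp has with h | h
    · rw [h, hb0]
    · exact ih (fun a has => hf a (Finset.mem_insert_of_mem has)) ht0 a h

private lemma cone_smul_zero (hz : (0:G) ∈ C)
    (ha : ∀ a ∈ C, ∀ b ∈ C, a + b ∈ C)
    (hp : ∀ a : G, a ∈ C → -a ∈ C → a = 0)
    {m : ℤ} (hm : 1 ≤ m) {v : G} (hv : v ∈ C) (h : m • v = 0) : v = 0 := by
  apply hp _ hv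
  have : -v = (m - 1) • v := by
    rw [sub_smul, one_smul, h, zero_sub]
  rw [this]
  exact cone_smul_mem hz ha (by omega) hv

end cone

/-- Claim 6 in Proposition 5.5. -/
theorem stmt_15 {n : ℕ} (H : Fin n → Type*) [∀ i, AddCommGroup (H i)]
    (Hpos : ∀ i, Set (H i))
    (hzero : ∀ i, (0 : H i) ∈ Hpos i)
    (hadd : ∀ i, ∀ a ∈ Hpos i, ∀ b ∈ Hpos i, a + b ∈ Hpos i)
    (hpointed : ∀ i, ∀ a : H i, a ∈ Hpos i → -a ∈ Hpos i → a = 0)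
    (S : AddSubgroup (∀ i, H i))
    (hSsing : ∀ f ∈ S, (∀ i, f i ∈ Hpos i) → f = 0) :
    ¬ ∃ x : ∀ i, H i, x ∈ S ∧ x ≠ 0 ∧
      ∀ i : Fin n, x i ≠ 0 →
        ∃ (m : ℤ) (a : ∀ i, H i), 1 ≤ m ∧ a ∈ S ∧
          (∀ j, j ≠ i → a j ∈ Hpos j) ∧
          (∀ j, (a + m • Pi.single i (x i)) j ∈ Hpos j) ∧
          a + m • Pi.single i (x i) ≠ 0 := by
  rintro ⟨x, hxS, hxne, hx⟩
  classical
  -- an index where x is nonzero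
  obtain ⟨j, hj⟩ : ∃ j, x j ≠ 0 := by
    by_contra h
    push_neg at h
    exact hxne (funext h)
  -- unconditional choice of witnesses
  have key : ∀ i, ∃ (m : ℤ) (a : ∀ i, H i), 1 ≤ m ∧ a ∈ S ∧
      (∀ k, k ≠ i → a k ∈ Hpos k) ∧
      (∀ k, (a + m • Pi.single i (x i)) k ∈ Hpos k) ∧
      (x i ≠ 0 → a + m • Pi.single i (x i) ≠ 0) := by
    intro i
    by_cases hxi : x i = 0
    · exact ⟨1, 0, le_refl 1, S.zero_mem, fun k _ => hzero k,
        fun k => by simp [hxi, hzero k], fun h => absurd hxi h⟩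
    · obtain ⟨m, a, h1, h2, h3, h4, h5⟩ := hx i hxi
      exact ⟨m, a, h1, h2, h3, h4, fun _ => h5⟩
  choose m a hm haS hapos hcone hne using key
  set c : ∀ i : Fin n, (∀ k, H k) := fun i => a i + m i • Pi.single i (x i) with hc
  have hmpos : ∀ i, (0:ℤ) < m i := fun i => lt_of_lt_of_le zero_lt_one (hm i)
  set lam : Fin n → ℤ := fun i => ∏ k ∈ Finset.univ.erase i, m k with hlamdef
  have hlam : ∀ i, 0 ≤ lam i := fun i =>
    Finset.prod_nonneg fun k _ => (hmpos k).le
  set M : ℤ := ∏ k, m k with hM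
  have hlamm : ∀ i, lam i * m i = M := fun i => by
    rw [mul_comm]
    exact Finset.mul_prod_erase _ _ (Finset.mem_univ i)
  set y : ∀ k, H k := ∑ i, lam i • c i with hy
  -- y ∈ S
  have hyS : y ∈ S := by
    have hrw : y = (∑ i, lam i • a i) + M • x := by
      rw [hy]
      have : ∀ i : Fin n, lam i • c i = lam i • a i + M • Pi.single i (x i) := by
        intro i
        rw [hc, smul_add, smul_smul, hlamm]
      rw [Finset.sum_congr rfl fun i _ => this i, Finset.sum_add_distrib,
        ← Finset.smul_sum, Finset.univ_sum_single]
    rw [hrw]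
    exact S.add_mem (AddSubgroup.sum_mem S fun i _ => S.zsmul_mem (haS i) _)
      (S.zsmul_mem hxS _)
  -- y is in the cone
  have hypos : ∀ k, y k ∈ Hpos k := by
    intro k
    rw [hy, Finset.sum_apply]
    exact cone_sum_mem (hzero k) (hadd k) _ _ fun i _ => by
      rw [Pi.smul_apply]
      exact cone_smul_mem (hzero k) (hadd k) (hlam i) (hcone i k)
  have hy0 : y = 0 := hSsing y hyS hypos
  -- conclude each summand vanishes
  have hcj0 : c j = 0 := by
    funext k
    have hsum0 : ∑ i, lam i • (c i k) = 0 := by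
      have := congrFun hy0 k
      rw [hy, Finset.sum_apply] at this
      simpa using this
    have := cone_sum_eq_zero (hzero k) (hadd k) (hpointed k) Finset.univ
      (fun i => lam i • (c i k))
      (fun i _ => cone_smul_mem (hzero k) (hadd k) (hlam i) (hcone i k))
      hsum0 j (Finset.mem_univ j)
    have hlamj : 1 ≤ lam j := by
      have : 0 < lam j := Finset.prod_pos fun k _ => hmpos k
      omega
    exact cone_smul_zero (hzero k) (hadd k) (hpointed k) hlamj (hcone j k) this
  exact hne j hj hcj0
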